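/- For every w ∈ S_n there is exactly one subset I ⊆ Φ⁺ with ∑_{α∈I} α = ρ − wρ, namely I = { α ∈ Φ⁺ : α ∉ wΦ⁺ }. (Equivalently: the weight ρ − wρ occurs with multiplicity exactly one in the multiset P of subset-sums of positive roots.) -/
import Mathlib


open Finset

/-- The positive root `ε_i − ε_j` (for `i < j`) of `gl_n`, as a vector in `ℚ^n`. -/
def posRoot {n : ℕ} (i j : Fin n) : Fin n → ℚ :=
  fun k => (if k = i then 1 else 0) - (if k = j then 1 else 0)

/-- The set `Φ⁺ = { ε_i − ε_j : i < j }` of positive roots of `gl_n`. -/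
def PosRoots (n : ℕ) : Finset (Fin n → ℚ) :=
  ((Finset.univ : Finset (Fin n × Fin n)).filter (fun p => p.1 < p.2)).image
    (fun p => posRoot p.1 p.2)

/-- The action of `S_n` on weights by permuting coordinates: `(wλ)_i = λ_{w⁻¹ i}`. -/
def wAct {n : ℕ} (w : Equiv.Perm (Fin n)) (v : Fin n → ℚ) : Fin n → ℚ :=
  fun i => v (w⁻¹ i)

/-- `ρ = (1/2) ∑_{α ∈ Φ⁺} α`. -/
def rho (n : ℕ) : Fin n → ℚ := (1 / 2 : ℚ) • ∑ α ∈ PosRoots n, α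

/-- The dot action `w·λ = w(λ+ρ) − ρ`. -/
def dotAct {n : ℕ} (w : Equiv.Perm (Fin n)) (lam : Fin n → ℚ) : Fin n → ℚ :=
  wAct w (lam + rho n) - rho n

/-- A weight is integral if all of its coordinates are integers. -/
def Integral {n : ℕ} (lam : Fin n → ℚ) : Prop := ∀ i, ∃ m : ℤ, lam i = (m : ℚ)

/-- A weight is dominant if it is integral and `λ_i − λ_{i+1} ≥ 0` for all consecutive `i`. -/
def Dominant {n : ℕ} (lam : Fin n → ℚ) : Prop :=
  Integral lam ∧ ∀ i j : Fin n, (i : ℕ) + 1 = (j : ℕ) → 0 ≤ lam i - lam j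

/-- A weight is regular if `λ_i − λ_j` is a nonzero integer for all `i ≠ j`. -/
def Regular {n : ℕ} (lam : Fin n → ℚ) : Prop :=
  ∀ i j : Fin n, i ≠ j → ∃ m : ℤ, m ≠ 0 ∧ lam i - lam j = (m : ℚ)

section Helpers
variable {n : ℕ}

lemma posRoot_inj {i j a b : Fin n} (hij : i ≠ j) (hab : a ≠ b)
    (h : posRoot i j = posRoot a b) : i = a ∧ j = b := by
  clear hab
  have h1 := congrFun h i
  have h2 := congrFun h j
  simp only [posRoot, if_pos rfl, if_neg hij, if_neg (Ne.symm hij)] at h1 h2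
  constructor
  · by_cases hia : i = a
    · exact hia
    · exfalso
      rw [if_neg hia] at h1
      by_cases hib : i = b <;> simp [hib] at h1 <;> norm_num at h1
  · by_cases hjb : j = b
    · exact hjb
    · exfalso
      rw [if_neg hjb] at h2
      by_cases hja : j = a <;> simp [hja] at h2 <;> norm_num at h2

lemma wAct_posRoot (w : Equiv.Perm (Fin n)) (a b : Fin n) :
    wAct w (posRoot a b) = posRoot (w a) (w b) := by
  funext k
  simp only [wAct, posRoot, Equiv.Perm.inv_eq_iff_eq]

/-- The set of "inversion pairs". -/
def invPairs (σ : Equiv.Perm (Fin n)) : Finset (Fin n × Fin n) :=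
  univ.filter fun p => p.1 < p.2 ∧ σ p.2 < σ p.1

lemma sum_posRoot_apply (T : Finset (Fin n × Fin n)) (k : Fin n) :
    (∑ p ∈ T, posRoot p.1 p.2) k
      = ((T.filter (fun p => p.1 = k)).card : ℚ)
        - ((T.filter (fun p => p.2 = k)).card : ℚ) := by
  rw [Finset.sum_apply]
  have h : ∀ p ∈ T, posRoot p.1 p.2 k
      = (if p.1 = k then (1:ℚ) else 0) - (if p.2 = k then (1:ℚ) else 0) := by
    intro p _
    simp [posRoot, eq_comm]
  rw [Finset.sum_congr rfl h, Finset.sum_sub_distrib, Finset.sum_boole, Finset.sum_boole]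

lemma card_filter_lt_fin (k : Fin n) :
    ((univ : Finset (Fin n)).filter fun i => i < k).card = k.val := by
  have : (univ : Finset (Fin n)).filter (fun i => i < k) = Finset.Iio k := by
    ext a; simp
  rw [this, Fin.card_Iio]

lemma card_filter_gt_fin (k : Fin n) :
    ((univ : Finset (Fin n)).filter fun i => k < i).card = n - 1 - k.val := by
  have : (univ : Finset (Fin n)).filter (fun i => k < i) = Finset.Ioi k := by
    ext a; simp
  rw [this, Fin.card_Ioi]

lemma card_filter_perm_lt (σ : Equiv.Perm (Fin n)) (k : Fin n) :
    ((univ : Finset (Fin n)).filter fun i => σ i < σ k).card = (σ k).val := by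
  have him : ((univ : Finset (Fin n)).filter fun i => σ i < σ k).image σ
      = (univ : Finset (Fin n)).filter fun j => j < σ k := by
    ext j
    simp only [Finset.mem_image, Finset.mem_filter, Finset.mem_univ, true_and]
    constructor
    · rintro ⟨i, hi, rfl⟩; exact hi
    · intro hj; exact ⟨σ⁻¹ j, by simpa using hj, by simp⟩
  rw [← card_filter_lt_fin (σ k), ← him, Finset.card_image_of_injective _ σ.injective]

end Helpers

section Count
variable {n : ℕ}

lemma out_invPairs (σ : Equiv.Perm (Fin n)) (k : Fin n) :
    (invPairs σ |>.filter fun p => p.1 = k)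
      = ((univ : Finset (Fin n)).filter fun j => k < j ∧ σ j < σ k).image (fun j => (k, j)) := by
  ext q
  simp only [invPairs, Finset.mem_filter, Finset.mem_image, Finset.mem_univ, true_and]
  constructor
  · rintro ⟨⟨h1, h2⟩, rfl⟩
    exact ⟨q.2, ⟨h1, h2⟩, rfl⟩
  · rintro ⟨j, ⟨h1, h2⟩, rfl⟩
    exact ⟨⟨h1, h2⟩, rfl⟩

lemma in_invPairs (σ : Equiv.Perm (Fin n)) (k : Fin n) :
    (invPairs σ |>.filter fun p => p.2 = k)
      = ((univ : Finset (Fin n)).filter fun i => i < k ∧ σ k < σ i).image (fun i => (i, k)) := by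
  ext q
  simp only [invPairs, Finset.mem_filter, Finset.mem_image, Finset.mem_univ, true_and]
  constructor
  · rintro ⟨⟨h1, h2⟩, rfl⟩
    exact ⟨q.1, ⟨h1, h2⟩, rfl⟩
  · rintro ⟨i, ⟨h1, h2⟩, rfl⟩
    exact ⟨⟨h1, h2⟩, rfl⟩

lemma count_split (σ : Equiv.Perm (Fin n)) (k : Fin n) :
    ((univ : Finset (Fin n)).filter fun i => i < k ∧ σ i < σ k).card
      + ((univ : Finset (Fin n)).filter fun i => i < k ∧ σ k < σ i).card = k.val := by
  have e2 : ((univ : Finset (Fin n)).filter fun i => i < k ∧ σ k < σ i)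
      = (univ : Finset (Fin n)).filter fun i => i < k ∧ ¬ σ i < σ k := by
    apply Finset.filter_congr
    intro i _
    constructor
    · rintro ⟨h1, h2⟩; exact ⟨h1, not_lt.2 h2.le⟩
    · rintro ⟨h1, h2⟩
      refine ⟨h1, lt_of_le_of_ne (not_lt.1 h2) fun h => ?_⟩
      exact absurd (σ.injective h) (ne_of_lt h1).symm
  rw [e2, ← card_filter_lt_fin k]
  have e1 : ∀ P : Fin n → Prop, ∀ inst : DecidablePred P,
      ((univ : Finset (Fin n)).filter fun i => i < k ∧ P i)
        = ((univ : Finset (Fin n)).filter fun i => i < k).filter P := by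
    intro P inst; rw [Finset.filter_filter]
  rw [e1 _ _, e1 _ _, Finset.card_filter_add_card_filter_not]

end Count

lemma count_split'' {n : ℕ} (σ : Equiv.Perm (Fin n)) (k : Fin n) :
    ((univ : Finset (Fin n)).filter fun i => i < k ∧ σ i < σ k).card
      + ((univ : Finset (Fin n)).filter fun i => k < i ∧ σ i < σ k).card = (σ k).val := by
  have conj : ∀ P Q : Fin n → Prop, ∀ iP : DecidablePred P, ∀ iQ : DecidablePred Q,
      ((univ : Finset (Fin n)).filter fun i => P i ∧ Q i)
        = ((univ : Finset (Fin n)).filter Q).filter P := by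
    intro P Q iP iQ
    rw [Finset.filter_filter]
    apply Finset.filter_congr
    intro i _
    exact and_comm
  have e2 : ((univ : Finset (Fin n)).filter fun i => k < i ∧ σ i < σ k)
      = (univ : Finset (Fin n)).filter fun i => (¬ i < k) ∧ σ i < σ k := by
    apply Finset.filter_congr
    intro i _
    constructor
    · rintro ⟨h1, h2⟩; exact ⟨not_lt.2 h1.le, h2⟩
    · rintro ⟨h1, h2⟩
      refine ⟨lt_of_le_of_ne (not_lt.1 h1) fun h => ?_, h2⟩
      rw [← h] at h2; exact lt_irrefl _ h2
  rw [e2, ← card_filter_perm_lt σ k, conj _ _ _ _, conj _ _ _ _,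
    Finset.card_filter_add_card_filter_not]

lemma dsum_invPairs {n : ℕ} (σ : Equiv.Perm (Fin n)) (k : Fin n) :
    (((invPairs σ).filter fun p => p.1 = k).card : ℤ)
      - (((invPairs σ).filter fun p => p.2 = k).card : ℤ)
      = ((σ k).val : ℤ) - (k.val : ℤ) := by
  rw [out_invPairs, in_invPairs,
    Finset.card_image_of_injective _ (fun a b h => by simpa using congrArg Prod.snd h),
    Finset.card_image_of_injective _ (fun a b h => by simpa using congrArg Prod.fst h)]
  have h1 := count_split σ k
  have h2 := count_split'' σ k
  omega

section RhoPos
variable {n : ℕ}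

/-- The index pairs of the positive roots. -/
def pPairs (n : ℕ) : Finset (Fin n × Fin n) :=
  (univ : Finset (Fin n × Fin n)).filter fun p => p.1 < p.2

lemma posRoots_eq : PosRoots n = (pPairs n).image fun p => posRoot p.1 p.2 := rfl

lemma posRoot_injOn {s : Finset (Fin n × Fin n)} (hs : ∀ p ∈ s, p.1 < p.2) :
    ∀ x ∈ s, ∀ y ∈ s, posRoot x.1 x.2 = posRoot y.1 y.2 → x = y := by
  intro x hx y hy h
  obtain ⟨h1, h2⟩ := posRoot_inj (ne_of_lt (hs x hx)) (ne_of_lt (hs y hy)) h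
  exact Prod.ext h1 h2

lemma out_pPairs (k : Fin n) :
    ((pPairs n).filter fun p => p.1 = k)
      = ((univ : Finset (Fin n)).filter fun j => k < j).image (fun j => (k, j)) := by
  ext q
  simp only [pPairs, Finset.mem_filter, Finset.mem_image, Finset.mem_univ, true_and]
  constructor
  · rintro ⟨h1, rfl⟩
    exact ⟨q.2, h1, rfl⟩
  · rintro ⟨j, h1, rfl⟩
    exact ⟨h1, rfl⟩

lemma in_pPairs (k : Fin n) :
    ((pPairs n).filter fun p => p.2 = k)
      = ((univ : Finset (Fin n)).filter fun i => i < k).image (fun i => (i, k)) := by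
  ext q
  simp only [pPairs, Finset.mem_filter, Finset.mem_image, Finset.mem_univ, true_and]
  constructor
  · rintro ⟨h1, rfl⟩
    exact ⟨q.1, h1, rfl⟩
  · rintro ⟨i, h1, rfl⟩
    exact ⟨h1, rfl⟩

lemma rho_apply (k : Fin n) : rho n k = ((n : ℚ) - 1) / 2 - (k.val : ℚ) := by
  have hsum : (∑ α ∈ PosRoots n, α) = ∑ p ∈ pPairs n, posRoot p.1 p.2 := by
    rw [posRoots_eq]
    exact Finset.sum_image (posRoot_injOn fun p hp => (Finset.mem_filter.1 hp).2)
  have hk : rho n k = (1/2 : ℚ) * ((∑ α ∈ PosRoots n, α) k) := by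
    simp [rho]
  rw [hk, hsum, sum_posRoot_apply, out_pPairs, in_pPairs,
    Finset.card_image_of_injective _ (fun a b h => by simpa using congrArg Prod.snd h),
    Finset.card_image_of_injective _ (fun a b h => by simpa using congrArg Prod.fst h),
    card_filter_gt_fin, card_filter_lt_fin]
  have h1 : k.val ≤ n - 1 := by omega
  have h2 : 1 ≤ n := k.pos.trans_le (by omega)
  rw [Nat.cast_sub h1, Nat.cast_sub h2]
  push_cast
  ring

end RhoPos

section Mem
variable {n : ℕ}

lemma mem_wPos {i j : Fin n} (hij : i ≠ j) (w : Equiv.Perm (Fin n)) :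
    posRoot i j ∈ (PosRoots n).image (wAct w) ↔ w⁻¹ i < w⁻¹ j := by
  constructor
  · intro h
    rw [Finset.mem_image] at h
    obtain ⟨α, hα, hαe⟩ := h
    rw [posRoots_eq, Finset.mem_image] at hα
    obtain ⟨p, hp, rfl⟩ := hα
    have hp' : p.1 < p.2 := (Finset.mem_filter.1 hp).2
    rw [wAct_posRoot] at hαe
    obtain ⟨h1, h2⟩ := posRoot_inj (fun h => (ne_of_lt hp') (w.injective h)) hij hαe
    rw [← h1, ← h2]
    simpa using hp'
  · intro h
    rw [Finset.mem_image]
    refine ⟨posRoot (w⁻¹ i) (w⁻¹ j), ?_, ?_⟩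
    · rw [posRoots_eq, Finset.mem_image]
      exact ⟨(w⁻¹ i, w⁻¹ j), Finset.mem_filter.2 ⟨Finset.mem_univ _, h⟩, rfl⟩
    · rw [wAct_posRoot]
      simp
lemma notin_filter_eq (w : Equiv.Perm (Fin n)) :
    (PosRoots n).filter (fun α => α ∉ (PosRoots n).image (wAct w))
      = (invPairs w⁻¹).image fun p => posRoot p.1 p.2 := by
  rw [posRoots_eq, Finset.filter_image]
  congr 1
  rw [invPairs, pPairs, Finset.filter_filter]
  apply Finset.filter_congr
  intro p _
  constructor
  · rintro ⟨h1, h2⟩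
    refine ⟨h1, ?_⟩
    have h2' : ¬ w⁻¹ p.1 < w⁻¹ p.2 := fun hc => h2 ((mem_wPos (ne_of_lt h1) w).2 hc)
    rcases lt_trichotomy (w⁻¹ p.1) (w⁻¹ p.2) with h | h | h
    · exact absurd h h2'
    · exact absurd (w⁻¹.injective h) (ne_of_lt h1)
    · exact h
  · rintro ⟨h1, h2⟩
    exact ⟨h1, fun hc => absurd ((mem_wPos (ne_of_lt h1) w).1 hc) (not_lt.2 h2.le)⟩

end Mem

/-- Core combinatorial lemma: a set of increasing pairs with prescribed
out-degree minus in-degree at each vertex is unique. -/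
lemma core_unique {n : ℕ} (f : Fin n → ℕ) (V : Finset (Fin n)) :
    Set.InjOn f ↑V →
    ∀ T : Finset (Fin n × Fin n),
    (∀ p ∈ T, p.1 ∈ V ∧ p.2 ∈ V ∧ p.1 < p.2) →
    (∀ k ∈ V, ((T.filter fun q => q.1 = k).card : ℤ)
        - ((T.filter fun q => q.2 = k).card : ℤ)
      = ((V.filter fun i => f i < f k).card : ℤ)
        - ((V.filter fun i => i < k).card : ℤ)) →
    T = (V ×ˢ V).filter fun q => q.1 < q.2 ∧ f q.2 < f q.1 := by
  induction V using Finset.strongInduction with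
  | _ V ih =>
  intro hf T hT hdeg
  rcases V.eq_empty_or_nonempty with rfl | hne
  · have hTe : T = ∅ := Finset.eq_empty_of_forall_notMem fun p hp => by
      simpa using (hT p hp).1
    simp [hTe]
  obtain ⟨p, hpV, hpmax⟩ := Finset.exists_max_image V f hne
  have hmax' : ∀ a ∈ V, a ≠ p → f a < f p := fun a ha hne' =>
    lt_of_le_of_ne (hpmax a ha) fun h => hne' (hf ha hpV h)
  set r := (V.filter fun i => i < p).card with hr
  set s := (V.filter fun i => p < i).card with hs
  have hrs : (V.erase p).card = r + s := by
    have e1 : (V.erase p).filter (fun i => i < p) = V.filter (fun i => i < p) := by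
      ext a; simp only [Finset.mem_filter, Finset.mem_erase]
      exact ⟨fun h => ⟨h.1.2, h.2⟩, fun h => ⟨⟨ne_of_lt h.2, h.1⟩, h.2⟩⟩
    have e2 : (V.erase p).filter (fun i => ¬ i < p) = V.filter (fun i => p < i) := by
      ext a; simp only [Finset.mem_filter, Finset.mem_erase, not_lt]
      constructor
      · rintro ⟨⟨h1, h2⟩, h3⟩; exact ⟨h2, lt_of_le_of_ne h3 (Ne.symm h1)⟩
      · rintro ⟨h1, h2⟩; exact ⟨⟨(ne_of_lt h2).symm, h1⟩, h2.le⟩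
    rw [← Finset.card_filter_add_card_filter_not
      (s := V.erase p) (p := fun i => i < p), e1, e2]
  have hVc : (V.erase p).card + 1 = V.card := Finset.card_erase_add_one hpV
  have hval : V.filter (fun i => f i < f p) = V.erase p := by
    ext a
    simp only [Finset.mem_filter, Finset.mem_erase]
    constructor
    · rintro ⟨h1, h2⟩
      exact ⟨fun h => by subst h; exact lt_irrefl _ h2, h1⟩
    · rintro ⟨h1, h2⟩; exact ⟨h2, hmax' a h2 h1⟩
  set A := T.filter (fun q => q.1 = p) with hA
  set B := (V.filter fun j => p < j).image (fun j => (p, j)) with hB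
  have hAB : A ⊆ B := by
    intro q hq
    rw [hA, Finset.mem_filter] at hq
    obtain ⟨hqT, hq1⟩ := hq
    obtain ⟨_, h2, h3⟩ := hT q hqT
    rw [hB, Finset.mem_image]
    exact ⟨q.2, Finset.mem_filter.2 ⟨h2, hq1 ▸ h3⟩, Prod.ext hq1.symm rfl⟩
  have hBcard : B.card = s :=
    Finset.card_image_of_injective _ (fun a b h => by simpa using congrArg Prod.snd h)
  have h0 := hdeg p hpV
  rw [hval] at h0
  have hle : A.card ≤ s := hBcard ▸ Finset.card_le_card hAB
  have hcards : A.card = s ∧ (T.filter fun q => q.2 = p).card = 0 := by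
    rw [← hA] at h0
    constructor <;> omega
  have hAeqB : A = B :=
    Finset.eq_of_subset_of_card_le hAB (by rw [hBcard, hcards.1])
  have hnoin : ∀ q ∈ T, q.2 ≠ p := by
    intro q hq hq2
    have hmem : q ∈ T.filter fun q => q.2 = p := Finset.mem_filter.2 ⟨hq, hq2⟩
    rw [Finset.card_eq_zero.1 hcards.2] at hmem
    exact absurd hmem (Finset.notMem_empty q)
  have hedge : ∀ j ∈ V, p < j → (p, j) ∈ T := by
    intro j hj hpj
    have hmem : (p, j) ∈ B := Finset.mem_image.2 ⟨j, Finset.mem_filter.2 ⟨hj, hpj⟩, rfl⟩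
    rw [← hAeqB] at hmem
    exact (Finset.mem_filter.1 hmem).1
  set T' := T.filter (fun q => q.1 ≠ p) with hT'
  have hf' : Set.InjOn f ↑(V.erase p) :=
    hf.mono (by exact_mod_cast Finset.erase_subset p V)
  have hTsub : ∀ q ∈ T', q.1 ∈ V.erase p ∧ q.2 ∈ V.erase p ∧ q.1 < q.2 := by
    intro q hq
    rw [hT', Finset.mem_filter] at hq
    obtain ⟨hqT, hq1⟩ := hq
    obtain ⟨h1, h2, h3⟩ := hT q hqT
    exact ⟨Finset.mem_erase.2 ⟨hq1, h1⟩, Finset.mem_erase.2 ⟨hnoin q hqT, h2⟩, h3⟩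
  have hdeg' : ∀ k ∈ V.erase p,
      ((T'.filter fun q => q.1 = k).card : ℤ) - ((T'.filter fun q => q.2 = k).card : ℤ)
        = (((V.erase p).filter fun i => f i < f k).card : ℤ)
          - (((V.erase p).filter fun i => i < k).card : ℤ) := by
    intro k hk
    obtain ⟨hkp, hkV⟩ := Finset.mem_erase.1 hk
    have e1 : T'.filter (fun q => q.1 = k) = T.filter (fun q => q.1 = k) := by
      rw [hT', Finset.filter_filter]
      apply Finset.filter_congr
      intro q _
      exact ⟨fun h => h.2, fun h => ⟨h ▸ hkp, h⟩⟩
    have hc : (T.filter fun q => q.2 = k).filter (fun q => ¬ q.1 = p)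
        = T'.filter fun q => q.2 = k := by
      rw [hT', Finset.filter_comm]
    have hone : (T.filter fun q => q.2 = k).filter (fun q => q.1 = p)
        = if p < k then {((p, k) : Fin n × Fin n)} else ∅ := by
      ext q
      simp only [Finset.mem_filter]
      constructor
      · rintro ⟨⟨hqT, hq2⟩, hq1⟩
        have hqe : q = (p, k) := Prod.ext hq1 hq2
        have hpk : p < k := by
          have := (hT q hqT).2.2
          rwa [hq1, hq2] at this
        rw [if_pos hpk, hqe, Finset.mem_singleton]
      · intro hq
        by_cases hpk : p < k
        · rw [if_pos hpk, Finset.mem_singleton] at hq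
          subst hq
          exact ⟨⟨hedge k hkV hpk, rfl⟩, rfl⟩
        · rw [if_neg hpk] at hq
          exact absurd hq (Finset.notMem_empty q)
    have hsplit := Finset.card_filter_add_card_filter_not
      (s := T.filter fun q => q.2 = k) (p := fun q => q.1 = p)
    rw [hone, hc] at hsplit
    have e3 : (V.erase p).filter (fun i => f i < f k) = V.filter (fun i => f i < f k) := by
      ext a
      simp only [Finset.mem_filter, Finset.mem_erase]
      constructor
      · rintro ⟨⟨_, h1⟩, h2⟩; exact ⟨h1, h2⟩
      · rintro ⟨h1, h2⟩
        refine ⟨⟨fun h => ?_, h1⟩, h2⟩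
        subst h
        exact absurd h2 (not_lt.2 (hpmax k hkV))
    have e4 : ((V.erase p).filter fun i => i < k) = (V.filter fun i => i < k).erase p :=
      Finset.filter_erase _ _ _
    have hdk := hdeg k hkV
    rw [e1, e3, e4]
    by_cases hpk : p < k
    · have hpmem : p ∈ V.filter (fun i => i < k) := Finset.mem_filter.2 ⟨hpV, hpk⟩
      have hc1 : ((V.filter fun i => i < k).erase p).card + 1
          = (V.filter fun i => i < k).card := Finset.card_erase_add_one hpmem
      rw [if_pos hpk] at hsplit
      simp only [Finset.card_singleton] at hsplit
      omega
    · rw [if_neg hpk] at hsplit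
      simp only [Finset.card_empty] at hsplit
      have : ((V.filter fun i => i < k).erase p) = V.filter fun i => i < k :=
        Finset.erase_eq_of_notMem (fun h => hpk (Finset.mem_filter.1 h).2)
      rw [this]
      omega
  have hmain := ih (V.erase p) (Finset.erase_ssubset hpV) hf' T' hTsub hdeg'
  ext q
  simp only [Finset.mem_filter, Finset.mem_product]
  by_cases hq1 : q.1 = p
  · by_cases hq2 : q.2 = p
    · constructor
      · intro hqT
        have := (hT q hqT).2.2
        rw [hq1, hq2] at this
        exact absurd this (lt_irrefl p)
      · rintro ⟨_, h, _⟩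
        rw [hq1, hq2] at h
        exact absurd h (lt_irrefl p)
    · constructor
      · intro hqT
        have hqA : q ∈ A := Finset.mem_filter.2 ⟨hqT, hq1⟩
        rw [hAeqB, hB] at hqA
        obtain ⟨j, hj, hqe⟩ := Finset.mem_image.1 hqA
        obtain ⟨hjV, hpj⟩ := Finset.mem_filter.1 hj
        subst hqe
        have hjp : j ≠ p := fun h => absurd (h ▸ hpj) (lt_irrefl p)
        exact ⟨⟨hpV, hjV⟩, hpj, hmax' j hjV hjp⟩
      · rintro ⟨⟨hv1, hv2⟩, hlt, hfl⟩
        have hq2lt : p < q.2 := hq1 ▸ hlt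
        have hqe : q = (p, q.2) := Prod.ext hq1 rfl
        rw [hqe]
        exact hedge q.2 hv2 hq2lt
  · by_cases hq2 : q.2 = p
    · constructor
      · intro hqT
        exact absurd hq2 (hnoin q hqT)
      · rintro ⟨⟨hv1, hv2⟩, hlt, hfl⟩
        rw [hq2] at hfl
        exact absurd hfl (not_lt.2 (hpmax q.1 hv1))
    · constructor
      · intro hqT
        have hqT' : q ∈ T' := Finset.mem_filter.2 ⟨hqT, hq1⟩
        rw [hmain] at hqT'
        simp only [Finset.mem_filter, Finset.mem_product, Finset.mem_erase] at hqT'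
        exact ⟨⟨hqT'.1.1.2, hqT'.1.2.2⟩, hqT'.2⟩
      · rintro ⟨⟨hv1, hv2⟩, hc⟩
        have hqT' : q ∈ T' := by
          rw [hmain]
          simp only [Finset.mem_filter, Finset.mem_product, Finset.mem_erase]
          exact ⟨⟨⟨hq1, hv1⟩, ⟨hq2, hv2⟩⟩, hc⟩
        exact (Finset.mem_filter.1 hqT').1


/-- There is exactly one subset `I` of the positive roots whose sum is
`rho - w rho`, namely the set of positive roots not in `w Φ⁺`. -/
theorem unique_subset_sum_rho_sub_w_rho {n : ℕ} (hn : 1 ≤ n)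
    (w : Equiv.Perm (Fin n)) :
    (∑ α ∈ (PosRoots n).filter (fun α => α ∉ (PosRoots n).image (wAct w)), α =
      rho n - wAct w (rho n)) ∧
    (∀ I : Finset (Fin n → ℚ), I ⊆ PosRoots n →
      ∑ α ∈ I, α = rho n - wAct w (rho n) →
        I = (PosRoots n).filter (fun α => α ∉ (PosRoots n).image (wAct w))) := by
  set σ := w⁻¹ with hσ
  have htarget : ∀ k : Fin n, (rho n - wAct w (rho n)) k
      = ((σ k).val : ℚ) - (k.val : ℚ) := by
    intro k
    simp only [Pi.sub_apply, wAct, rho_apply, hσ]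
    ring
  have hinvlt : ∀ p ∈ invPairs σ, p.1 < p.2 :=
    fun p hp => (Finset.mem_filter.1 hp).2.1
  have hpart1 : ∑ α ∈ (PosRoots n).filter (fun α => α ∉ (PosRoots n).image (wAct w)), α
      = rho n - wAct w (rho n) := by
    rw [notin_filter_eq w, ← hσ, Finset.sum_image (posRoot_injOn hinvlt)]
    funext k
    rw [sum_posRoot_apply, htarget k]
    exact_mod_cast dsum_invPairs σ k
  refine ⟨hpart1, ?_⟩
  intro I hI hsum
  set T := (univ : Finset (Fin n × Fin n)).filter
    (fun p => p.1 < p.2 ∧ posRoot p.1 p.2 ∈ I) with hTdef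
  have hTlt : ∀ p ∈ T, p.1 < p.2 := fun p hp => (Finset.mem_filter.1 hp).2.1
  have hIT : I = T.image fun p => posRoot p.1 p.2 := by
    ext α
    constructor
    · intro hα
      have hαP := hI hα
      rw [posRoots_eq, Finset.mem_image] at hαP
      obtain ⟨p, hp, rfl⟩ := hαP
      have hp' : p.1 < p.2 := (Finset.mem_filter.1 hp).2
      exact Finset.mem_image.2 ⟨p, Finset.mem_filter.2 ⟨Finset.mem_univ _, hp', hα⟩, rfl⟩
    · intro hα
      obtain ⟨p, hp, rfl⟩ := Finset.mem_image.1 hα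
      exact (Finset.mem_filter.1 hp).2.2
  have hsum' : ∑ p ∈ T, posRoot p.1 p.2 = rho n - wAct w (rho n) := by
    rw [hIT, Finset.sum_image (posRoot_injOn hTlt)] at hsum
    exact hsum
  have hdegT : ∀ k : Fin n, ((T.filter fun q => q.1 = k).card : ℤ)
      - ((T.filter fun q => q.2 = k).card : ℤ)
      = ((σ k).val : ℤ) - (k.val : ℤ) := by
    intro k
    have h1 : ((T.filter fun q => q.1 = k).card : ℚ)
        - ((T.filter fun q => q.2 = k).card : ℚ)
        = ((σ k).val : ℚ) - (k.val : ℚ) := by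
      rw [← sum_posRoot_apply, hsum', htarget k]
    exact_mod_cast h1
  have hcore := core_unique (fun i => (σ i).val) univ
    (fun a _ b _ h => σ.injective (Fin.val_injective h)) T
    (fun p hp => ⟨Finset.mem_univ _, Finset.mem_univ _, hTlt p hp⟩)
    ?_
  · have hfin : ((univ : Finset (Fin n)) ×ˢ univ).filter
        (fun q : Fin n × Fin n => q.1 < q.2 ∧ (σ q.2).val < (σ q.1).val)
        = invPairs σ := by
      ext q
      constructor
      · intro hq
        rw [Finset.mem_filter] at hq
        exact Finset.mem_filter.2 ⟨Finset.mem_univ _, hq.2.1, Fin.lt_def.2 hq.2.2⟩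
      · intro hq
        rw [invPairs, Finset.mem_filter] at hq
        exact Finset.mem_filter.2 ⟨Finset.mem_product.2 ⟨Finset.mem_univ _, Finset.mem_univ _⟩,
          hq.2.1, Fin.lt_def.1 hq.2.2⟩
    rw [hfin] at hcore
    rw [hIT, hcore, notin_filter_eq w, ← hσ]
  · intro k _
    rw [hdegT k]
    have hv : (univ : Finset (Fin n)).filter (fun i => (σ i).val < (σ k).val)
        = (univ : Finset (Fin n)).filter (fun i => σ i < σ k) :=
      Finset.filter_congr fun i _ => Fin.lt_def.symm
    rw [hv, card_filter_perm_lt σ k, card_filter_lt_fin k]
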